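/- Let F = {f_i(x) = a_i x + b_i : i = 1,…,n} be a finite set of real affine functions with a_i > 1 and b_i ≥ 0, such that F is a basis of a free semigroup (distinct finite words over {1,…,n} yield distinct compositions f_w) and ∑_{i=1}^n 1/a_i = 1. Then for every real s ≥ 0 there exist a constant c > 0 and a threshold x_0 such that for all x ≥ x_0, the cardinality of the orbit set satisfies |⟨F : s⟩ ∩ [0,x]| ≥ c · x / (log x)^{(n-1)/2}. -/

import Mathlib

section Lists
variable {n : ℕ} (a b : Fin n → ℝ)

lemma EG.foldr_affine (ha : ∀ i, 1 < a i) (w : List (Fin n)) (y : ℝ) :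
    w.foldr (fun i z => a i * z + b i) y
      = (w.map a).prod * y + w.foldr (fun i z => a i * z + b i) 0 := by
  induction w with
  | nil => simp
  | cons i w ih => simp only [List.foldr_cons, List.map_cons, List.prod_cons, ih]; ring

lemma EG.one_le_prod (ha : ∀ i, 1 < a i) (w : List (Fin n)) : 1 ≤ (w.map a).prod := by
  induction w with
  | nil => simp
  | cons i w ih =>
    simp only [List.map_cons, List.prod_cons]
    nlinarith [ha i]

lemma EG.foldr_zero_le (ha : ∀ i, 1 < a i) {C : ℝ} (hC0 : 0 ≤ C)
    (hC : ∀ i, b i ≤ C * (a i - 1)) (w : List (Fin n)) :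
    w.foldr (fun i z => a i * z + b i) 0 ≤ C * ((w.map a).prod - 1) := by
  induction w with
  | nil => simp
  | cons i w ih =>
    simp only [List.foldr_cons, List.map_cons, List.prod_cons]
    nlinarith [ha i, hC i, EG.one_le_prod a ha w]

lemma EG.foldr_nonneg (ha : ∀ i, 1 < a i) (hb : ∀ i, 0 ≤ b i) {s : ℝ} (hs : 0 ≤ s)
    (w : List (Fin n)) : 0 ≤ w.foldr (fun i z => a i * z + b i) s := by
  induction w with
  | nil => simpa
  | cons i w ih =>
    simp only [List.foldr_cons]
    nlinarith [ha i, hb i]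

end Lists

open Real

lemma EG.stirling_bounds {j : ℕ} (hj : 1 ≤ j) :
    Real.sqrt j * ((j : ℝ) / Real.exp 1) ^ j ≤ (j.factorial : ℝ) ∧
      (j.factorial : ℝ) ≤ 3 * Real.sqrt j * ((j : ℝ) / Real.exp 1) ^ j := by
  obtain ⟨j, rfl⟩ := Nat.exists_eq_add_of_le hj
  set m := 1 + j with hm
  have hm1 : 1 ≤ m := by omega
  have hms : m = (m - 1) + 1 := by omega
  have hlow : Real.sqrt π ≤ Stirling.stirlingSeq m := by
    have := Antitone.le_of_tendsto (f := Stirling.stirlingSeq ∘ Nat.succ)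
      Stirling.stirlingSeq'_antitone
      (Stirling.tendsto_stirlingSeq_sqrt_pi.comp (Filter.tendsto_add_atTop_nat 1)) (m - 1)
    simpa [Function.comp, Nat.succ_eq_add_one, ← hms] using this
  have hhigh : Stirling.stirlingSeq m ≤ Real.exp 1 / Real.sqrt 2 := by
    rw [hms, ← Stirling.stirlingSeq_one]
    exact Stirling.stirlingSeq'_antitone (Nat.zero_le _)
  have hden : (0:ℝ) < Real.sqrt (2 * m) * ((m : ℝ) / Real.exp 1) ^ m := by
    have : (0:ℝ) < (m:ℝ) := by exact_mod_cast hm1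
    positivity
  have hfac : (m.factorial : ℝ)
      = Stirling.stirlingSeq m * (Real.sqrt (2 * m) * ((m : ℝ) / Real.exp 1) ^ m) := by
    rw [Stirling.stirlingSeq, div_mul_cancel₀ _ hden.ne']
  have hsplit : Real.sqrt (2 * m) = Real.sqrt 2 * Real.sqrt m := by
    rw [← Real.sqrt_mul (by norm_num)]
  have hpow : (0:ℝ) ≤ ((m : ℝ) / Real.exp 1) ^ m := by positivity
  have hsm : (0:ℝ) ≤ Real.sqrt m := Real.sqrt_nonneg _
  constructor
  · rw [hfac, hsplit]
    have h1 : (1:ℝ) ≤ Real.sqrt π := by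
      rw [show (1:ℝ) = Real.sqrt 1 by simp]
      exact Real.sqrt_le_sqrt (by nlinarith [Real.pi_gt_three])
    have h2 : (1:ℝ) ≤ Real.sqrt 2 := by
      rw [show (1:ℝ) = Real.sqrt 1 by simp]
      exact Real.sqrt_le_sqrt (by norm_num)
    have hD : (0:ℝ) ≤ Real.sqrt 2 * Real.sqrt m * ((m : ℝ) / Real.exp 1) ^ m := by positivity
    have step := mul_le_mul_of_nonneg_right hlow hD
    nlinarith [mul_nonneg hsm hpow, step]
  · rw [hfac, hsplit]
    have h2 : (0:ℝ) < Real.sqrt 2 := by positivity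
    have he3 : Real.exp 1 ≤ 3 := by nlinarith [Real.exp_one_lt_d9]
    have := mul_le_mul_of_nonneg_right hhigh (le_of_lt (by positivity :
        (0:ℝ) < Real.sqrt 2 * Real.sqrt m * ((m : ℝ) / Real.exp 1) ^ m))
    calc Stirling.stirlingSeq m * (Real.sqrt 2 * Real.sqrt m * ((m : ℝ) / Real.exp 1) ^ m)
        ≤ Real.exp 1 / Real.sqrt 2 * (Real.sqrt 2 * Real.sqrt m * ((m : ℝ) / Real.exp 1) ^ m) :=
          this
      _ = Real.exp 1 * Real.sqrt m * ((m : ℝ) / Real.exp 1) ^ m := by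
          field_simp
      _ ≤ 3 * Real.sqrt m * ((m : ℝ) / Real.exp 1) ^ m := by
          nlinarith [mul_nonneg hsm hpow]

open Finset

lemma EG.count (k n : ℕ) (l₀ : Fin k → Fin n) :
    k.factorial ≤ (∏ i : Fin n, (Fintype.card {j : Fin k // l₀ j = i}).factorial)
      * ((Finset.univ : Finset (Equiv.Perm (Fin k))).image
          (fun σ => List.ofFn (fun j => l₀ (σ j)))).card := by
  classical
  set N := ∏ i : Fin n, (Fintype.card {j : Fin k // l₀ j = i}).factorial with hN
  have key : ∀ v ∈ (Finset.univ : Finset (Equiv.Perm (Fin k))).image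
      (fun σ => List.ofFn (fun j => l₀ (σ j))),
      (Finset.univ.filter fun σ : Equiv.Perm (Fin k) =>
        List.ofFn (fun j => l₀ (σ j)) = v).card ≤ N := by
    intro v hv
    obtain ⟨σ₀, -, h0⟩ := Finset.mem_image.1 hv
    -- map fiber into stabilizer
    have step1 : (Finset.univ.filter fun σ : Equiv.Perm (Fin k) =>
        List.ofFn (fun j => l₀ (σ j)) = v).card ≤
        (Finset.univ.filter fun τ : Equiv.Perm (Fin k) => ∀ j, l₀ (τ j) = l₀ j).card := by
      apply Finset.card_le_card_of_injOn (fun σ => σ * σ₀⁻¹)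
      · intro σ hσ
        simp only [Finset.mem_coe, Finset.mem_filter, Finset.mem_univ, true_and] at hσ ⊢
        have hfn : (fun j => l₀ (σ j)) = (fun j => l₀ (σ₀ j)) :=
          List.ofFn_injective (hσ.trans h0.symm)
        intro j
        have := congrFun hfn (σ₀⁻¹ j)
        simpa [Equiv.Perm.mul_apply, Equiv.apply_symm_apply] using this
      · intro σ _ σ' _ h
        exact mul_right_cancel h
    -- stabilizer card ≤ N
    have step2 : (Finset.univ.filter fun τ : Equiv.Perm (Fin k) =>
        ∀ j, l₀ (τ j) = l₀ j).card ≤ N := by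
      rw [← Fintype.card_subtype]
      have hinj : Function.Injective
          (fun τ : {τ : Equiv.Perm (Fin k) // ∀ j, l₀ (τ j) = l₀ j} =>
            fun i : Fin n => Equiv.ofBijective
              (fun p : {j : Fin k // l₀ j = i} =>
                (⟨τ.1 p.1, by rw [τ.2]; exact p.2⟩ : {j : Fin k // l₀ j = i}))
              (Finite.injective_iff_bijective.1 (fun p q h => Subtype.ext
                (τ.1.injective (congrArg Subtype.val h))))) := by
        intro τ τ' h
        apply Subtype.ext; apply Equiv.ext; intro j
        have h1 := congrFun h (l₀ j)
        have h2 := DFunLike.congr_fun h1 (⟨j, rfl⟩ : {j' : Fin k // l₀ j' = l₀ j})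
        exact congrArg Subtype.val h2
      calc Fintype.card {τ : Equiv.Perm (Fin k) // ∀ j, l₀ (τ j) = l₀ j}
          ≤ Fintype.card (∀ i : Fin n, Equiv.Perm {j : Fin k // l₀ j = i}) :=
            Fintype.card_le_of_injective _ hinj
        _ = N := by
            rw [Fintype.card_pi]
            exact Finset.prod_congr rfl fun i _ => Fintype.card_perm
    exact step1.trans step2
  have := Finset.card_le_mul_card_image (f := fun σ : Equiv.Perm (Fin k) =>
    List.ofFn (fun j => l₀ (σ j))) Finset.univ N key
  rwa [Finset.card_univ, Fintype.card_perm, Fintype.card_fin] at this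

lemma EG.fiber_card (n k : ℕ) (κ : Fin n → ℕ)
    (e : (Σ i : Fin n, Fin (κ i)) ≃ Fin k) (i : Fin n) :
    Fintype.card {j : Fin k // (e.symm j).1 = i} = κ i := by
  have e1 : {j : Fin k // (e.symm j).1 = i}
      ≃ {p : Σ i' : Fin n, Fin (κ i') // p.1 = i} :=
    (Equiv.subtypeEquiv e.symm (fun j => Iff.rfl))
  have e2 : {p : Σ i' : Fin n, Fin (κ i') // p.1 = i} ≃ Fin (κ i) :=
    { toFun := fun p => Fin.cast (congrArg κ p.2) p.1.2
      invFun := fun x => ⟨⟨i, x⟩, rfl⟩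
      left_inv := by rintro ⟨⟨i', x⟩, rfl⟩; rfl
      right_inv := fun x => rfl }
  rw [Fintype.card_congr (e1.trans e2), Fintype.card_fin]

lemma EG.prod_word (n k : ℕ) (κ : Fin n → ℕ) (a : Fin n → ℝ)
    (e : (Σ i : Fin n, Fin (κ i)) ≃ Fin k) (σ : Equiv.Perm (Fin k)) :
    ((List.ofFn (fun j => (e.symm (σ j)).1)).map a).prod = ∏ i, a i ^ κ i := by
  rw [List.map_ofFn, List.prod_ofFn]
  calc ∏ j, a ((e.symm (σ j)).1) = ∏ j, a ((e.symm j).1) :=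
        Equiv.prod_comp σ (fun j => a ((e.symm j).1))
    _ = ∏ p : Σ i' : Fin n, Fin (κ i'), a p.1 := Equiv.prod_comp e.symm (fun p => a p.1)
    _ = ∏ i, a i ^ κ i := by
        rw [← Finset.univ_sigma_univ, Finset.prod_sigma]
        simp [Finset.prod_const]

lemma EG.count' (n k : ℕ) (κ : Fin n → ℕ) (e : (Σ i : Fin n, Fin (κ i)) ≃ Fin k) :
    k.factorial ≤ (∏ i, (κ i).factorial) *
      ((Finset.univ : Finset (Equiv.Perm (Fin k))).image
        (fun σ => List.ofFn (fun j => (e.symm (σ j)).1))).card := by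
  have h := EG.count k n (fun j => (e.symm j).1)
  simpa [EG.fiber_card n k κ e] using h

set_option maxHeartbeats 1000000 in
theorem stmt_7 (n : ℕ) (a b : Fin n → ℝ)
    (ha : ∀ i, 1 < a i) (hb : ∀ i, 0 ≤ b i)
    (hsum : ∑ i, 1 / a i = 1)
    (hfree : ∀ w w' : List (Fin n), w ≠ [] → w' ≠ [] →
      (fun y => w.foldr (fun i z => a i * z + b i) y) =
        (fun y => w'.foldr (fun i z => a i * z + b i) y) → w = w')
    (s : ℝ) (hs : 0 ≤ s) :
    ∃ c : ℝ, 0 < c ∧ ∃ x₀ : ℝ, ∀ x : ℝ, x₀ ≤ x →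
      ∃ T : Finset ℝ,
        (↑T ⊆ {y : ℝ | ∃ w : List (Fin n), y = w.foldr (fun i z => a i * z + b i) s} ∩
          Set.Icc 0 x) ∧
        c * x / Real.log x ^ (((n : ℝ) - 1) / 2) ≤ (T.card : ℝ) := by
  classical
  have hn : 0 < n := by
    rcases Nat.eq_zero_or_pos n with h | h
    · subst h; simp at hsum
    · exact h
  have : Nonempty (Fin n) := ⟨⟨0, hn⟩⟩
  have hne : (Finset.univ : Finset (Fin n)).Nonempty := Finset.univ_nonempty
  have hn1 : (1:ℝ) ≤ (n:ℝ) := by exact_mod_cast hn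
  have ha0 : ∀ i, (0:ℝ) < a i := fun i => lt_trans one_pos (ha i)
  set C : ℝ := (Finset.univ.sup' hne fun i => b i / (a i - 1)) ⊔ 0 with hCdef
  have hC0 : 0 ≤ C := le_sup_right
  have hC : ∀ i, b i ≤ C * (a i - 1) := by
    intro i
    have h1 : b i / (a i - 1) ≤ C :=
      le_trans (Finset.le_sup' (fun i => b i / (a i - 1)) (Finset.mem_univ i)) le_sup_left
    have h2 : 0 < a i - 1 := sub_pos.2 (ha i)
    have h3 : b i = (b i / (a i - 1)) * (a i - 1) := by field_simp
    rw [h3]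
    exact mul_le_mul_of_nonneg_right h1 h2.le
  set K : ℝ := s + C + 1 with hKdef
  have hK1 : 1 ≤ K := by simp only [hKdef]; linarith
  have hK0 : 0 < K := lt_of_lt_of_le one_pos hK1
  have hL : ∀ i, 0 < Real.log (a i) := fun i => Real.log_pos (ha i)
  set H : ℝ := ∑ i, Real.log (a i) / a i with hHdef
  have hH : 0 < H := Finset.sum_pos (fun i _ => div_pos (hL i) (ha0 i)) hne
  set Λ : ℝ := ∑ i, Real.log (a i) with hLamdef
  have hΛ : 0 < Λ := Finset.sum_pos (fun i _ => hL i) hne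
  set amax : ℝ := Finset.univ.sup' hne a with hamaxdef
  have hamax : ∀ i, a i ≤ amax := fun i => Finset.le_sup' a (Finset.mem_univ i)
  have h1amax : 1 ≤ amax := le_trans (ha ⟨0, hn⟩).le (hamax ⟨0, hn⟩)
  set ep : ℝ := ((n:ℝ) - 1) / 2 with hepdef
  have hep0 : 0 ≤ ep := by rw [hepdef]; linarith
  set c₁ : ℝ := Real.exp (-(H + Λ)) / K with hc₁def
  have hc₁ : 0 < c₁ := div_pos (Real.exp_pos _) hK0
  set C₄ : ℝ := (1 + |Real.log K|) / H with hC₄def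
  have hC₄ : 0 < C₄ := div_pos (by positivity) hH
  set c₅ : ℝ := Real.exp (-(2*(n:ℝ))) / (3 ^ n * Real.sqrt 2) with hc₅def
  have hc₅ : 0 < c₅ := by positivity
  have hCp : 0 < C₄ ^ ep := Real.rpow_pos_of_pos hC₄ ep
  refine ⟨c₅ * c₁ / C₄ ^ ep, by positivity,
    K * Real.exp (H * (2*(n:ℝ) + amax + 2)) + Real.exp 1, ?_⟩
  intro x hx
  have hx1 : Real.exp 1 ≤ x := by nlinarith [Real.exp_pos (H * (2*(n:ℝ) + amax + 2))]
  have hx0 : 0 < x := lt_of_lt_of_le (Real.exp_pos 1) hx1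
  have hlogx : 1 ≤ Real.log x := (Real.le_log_iff_exp_le hx0).2 (by simpa using hx1)
  have hxK : Real.exp (H * (2*(n:ℝ) + amax + 2)) ≤ x / K := by
    rw [le_div_iff₀ hK0]
    nlinarith [Real.exp_pos (1:ℝ)]
  have hxK0 : 0 < x / K := div_pos hx0 hK0
  set t : ℝ := Real.log (x / K) with htdef
  have ht : H * (2*(n:ℝ) + amax + 2) ≤ t := (Real.le_log_iff_exp_le hxK0).2 hxK
  have htH : 2*(n:ℝ) + amax + 2 ≤ t / H := (le_div_iff₀ hH).2 (by linarith [ht])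
  have htH0 : 0 ≤ t / H := le_trans (by linarith) htH
  set m : ℕ := ⌊t / H⌋₊ with hmdef
  have hm_le : (m:ℝ) ≤ t / H := Nat.floor_le htH0
  have hm_gt : t / H - 1 < (m:ℝ) := Nat.sub_one_lt_floor _
  have hm1 : 2*(n:ℝ) + amax + 1 ≤ (m:ℝ) := by linarith
  have hm0 : (0:ℝ) < (m:ℝ) := by linarith
  -- κ and k
  set κ : Fin n → ℕ := fun i => ⌊(m:ℝ) / a i⌋₊ with hκdef
  have hκ_le : ∀ i, (κ i : ℝ) ≤ (m:ℝ) / a i := fun i => Nat.floor_le (div_nonneg hm0.le (ha0 i).le)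
  have hκ_gt : ∀ i, (m:ℝ) / a i - 1 < (κ i : ℝ) := fun i => Nat.sub_one_lt_floor _
  have hκ1 : ∀ i, 1 ≤ κ i := by
    intro i
    apply Nat.le_floor
    rw [Nat.cast_one, le_div_iff₀ (ha0 i)]
    have := hamax i
    linarith
  have hκm : ∀ i, (κ i:ℝ) ≤ (m:ℝ) := by
    intro i
    refine le_trans (hκ_le i) ?_
    rw [div_le_iff₀ (ha0 i)]
    nlinarith [ha i]
  set k : ℕ := ∑ i, κ i with hkdef
  have hk_cast : (k:ℝ) = ∑ i, (κ i:ℝ) := by rw [hkdef]; push_cast; rfl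
  have hsum_m : ∑ i, (m:ℝ)/a i = (m:ℝ) := by
    have : ∑ i, (m:ℝ)/a i = (m:ℝ) * ∑ i, 1/a i := by
      rw [Finset.mul_sum]
      exact Finset.sum_congr rfl fun i _ => by ring
    rw [this, hsum, mul_one]
  have hk_le : (k:ℝ) ≤ (m:ℝ) := by
    rw [hk_cast, ← hsum_m]
    exact Finset.sum_le_sum fun i _ => hκ_le i
  have hk_ge : (m:ℝ) - (n:ℝ) < (k:ℝ) := by
    rw [hk_cast]
    have h1 : ∑ i, ((m:ℝ)/a i - 1) < ∑ i, (κ i:ℝ) :=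
      Finset.sum_lt_sum_of_nonempty hne fun i _ => hκ_gt i
    have h2 : ∑ i, ((m:ℝ)/a i - 1) = (m:ℝ) - (n:ℝ) := by
      rw [Finset.sum_sub_distrib, hsum_m]
      simp
    linarith
  have hk1 : 1 ≤ k := by
    rw [hkdef]
    calc 1 ≤ n := hn
      _ = ∑ _i : Fin n, 1 := by simp
      _ ≤ ∑ i, κ i := Finset.sum_le_sum fun i _ => hκ1 i
  have hk0 : (0:ℝ) < (k:ℝ) := by
    have : (1:ℝ) ≤ (k:ℝ) := by exact_mod_cast hk1
    linarith
  -- P bounds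
  set P : ℝ := ∏ i, a i ^ κ i with hPdef
  have hP0 : 0 < P := Finset.prod_pos fun i _ => pow_pos (ha0 i) _
  have hlogP : Real.log P = ∑ i, (κ i:ℝ) * Real.log (a i) := by
    rw [hPdef, Real.log_prod fun i _ => (pow_pos (ha0 i) _).ne']
    exact Finset.sum_congr rfl fun i _ => by rw [Real.log_pow]
  have hlogP_le : Real.log P ≤ t := by
    rw [hlogP]
    calc ∑ i, (κ i:ℝ) * Real.log (a i) ≤ ∑ i, ((m:ℝ)/a i) * Real.log (a i) :=
        Finset.sum_le_sum fun i _ => mul_le_mul_of_nonneg_right (hκ_le i) (hL i).le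
      _ = (m:ℝ) * H := by
        rw [hHdef, Finset.mul_sum]
        exact Finset.sum_congr rfl fun i _ => by ring
      _ ≤ (t/H) * H := mul_le_mul_of_nonneg_right hm_le hH.le
      _ = t := by field_simp
  have hPxK : P ≤ x / K := by
    calc P = Real.exp (Real.log P) := (Real.exp_log hP0).symm
      _ ≤ Real.exp t := Real.exp_le_exp.2 hlogP_le
      _ = x / K := Real.exp_log hxK0
  have hPx : P * K ≤ x := by
    rw [← le_div_iff₀ hK0]; exact hPxK
  have hlogP_ge : t - H - Λ ≤ Real.log P := by
    rw [hlogP]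
    have h1 : ∑ i, ((m:ℝ)/a i - 1) * Real.log (a i) ≤ ∑ i, (κ i:ℝ) * Real.log (a i) :=
      Finset.sum_le_sum fun i _ => mul_le_mul_of_nonneg_right (hκ_gt i).le (hL i).le
    have h2 : ∑ i, ((m:ℝ)/a i - 1) * Real.log (a i) = (m:ℝ) * H - Λ := by
      rw [hHdef, hLamdef, Finset.mul_sum, ← Finset.sum_sub_distrib]
      exact Finset.sum_congr rfl fun i _ => by ring
    have h3 : (t/H - 1) * H ≤ (m:ℝ) * H := mul_le_mul_of_nonneg_right (by linarith) hH.le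
    have h4 : (t/H - 1) * H = t - H := by field_simp
    linarith
  have hPc₁ : c₁ * x ≤ P := by
    have h1 : Real.exp (t - H - Λ) ≤ P := by
      rw [← Real.exp_log hP0]; exact Real.exp_le_exp.2 hlogP_ge
    have h2 : Real.exp (t - H - Λ) = (x / K) * Real.exp (-(H + Λ)) := by
      rw [show t - H - Λ = t + (-(H+Λ)) by ring, Real.exp_add, htdef, Real.exp_log hxK0]
    rw [hc₁def]
    calc Real.exp (-(H + Λ)) / K * x = (x / K) * Real.exp (-(H + Λ)) := by ring
      _ ≤ P := h2 ▸ h1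
  -- combinatorial setup
  have hcards : Fintype.card (Σ i : Fin n, Fin (κ i)) = k := by
    rw [hkdef]; simp
  set e : (Σ i : Fin n, Fin (κ i)) ≃ Fin k := Fintype.equivFinOfCardEq hcards with hedef
  set W : Finset (List (Fin n)) := (Finset.univ : Finset (Equiv.Perm (Fin k))).image
      (fun σ => List.ofFn (fun j => (e.symm (σ j)).1)) with hWdef
  have hcount : k.factorial ≤ (∏ i, (κ i).factorial) * W.card := EG.count' n k κ e
  have hWmem : ∀ w ∈ W, w ≠ [] ∧ (w.map a).prod = P := by
    intro w hw
    rw [hWdef, Finset.mem_image] at hw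
    obtain ⟨σ, -, rfl⟩ := hw
    constructor
    · intro hnil
      have : k = 0 := by simpa using congrArg List.length hnil
      omega
    · rw [EG.prod_word n k κ a e σ, hPdef]
  have hinj : Set.InjOn (fun w : List (Fin n) => w.foldr (fun i z => a i * z + b i) s) ↑W := by
    intro w hw w' hw' hval
    obtain ⟨hwne, hwp⟩ := hWmem w (by exact_mod_cast hw)
    obtain ⟨hwne', hwp'⟩ := hWmem w' (by exact_mod_cast hw')
    apply hfree w w' hwne hwne'
    have hB : w.foldr (fun i z => a i * z + b i) 0 = w'.foldr (fun i z => a i * z + b i) 0 := by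
      have e1 := EG.foldr_affine a b ha w s
      have e2 := EG.foldr_affine a b ha w' s
      simp only at hval
      rw [e1, e2, hwp, hwp'] at hval
      linarith
    funext y
    rw [EG.foldr_affine a b ha w y, EG.foldr_affine a b ha w' y, hwp, hwp', hB]
  set T : Finset ℝ := W.image (fun w => w.foldr (fun i z => a i * z + b i) s) with hTdef
  have hcardT : T.card = W.card := Finset.card_image_of_injOn hinj
  refine ⟨T, ?_, ?_⟩
  · intro y hy
    simp only [hTdef, Finset.coe_image, Set.mem_image, Finset.mem_coe] at hy
    obtain ⟨w, hw, rfl⟩ := hy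
    obtain ⟨hwne, hwp⟩ := hWmem w hw
    refine ⟨⟨w, rfl⟩, ?_, ?_⟩
    · exact EG.foldr_nonneg a b ha hb hs w
    · calc w.foldr (fun i z => a i * z + b i) s
          = (w.map a).prod * s + w.foldr (fun i z => a i * z + b i) 0 :=
            EG.foldr_affine a b ha w s
        _ ≤ (w.map a).prod * s + C * ((w.map a).prod - 1) := by
            linarith [EG.foldr_zero_le a b ha hC0 hC w]
        _ ≤ P * K := by
            rw [hwp, hKdef]
            have h1 : C * (P - 1) ≤ C * P := mul_le_mul_of_nonneg_left (by linarith) hC0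
            have h2 : P * (s + C + 1) = P * s + C * P + P := by ring
            rw [h2]
            linarith only [h1, hP0]
        _ ≤ x := hPx
  -- final numeric bound
  have hWc0 : (0:ℝ) ≤ (W.card:ℝ) := Nat.cast_nonneg _
  have hκ0' : ∀ i, (0:ℝ) < (κ i:ℝ) := fun i => by exact_mod_cast hκ1 i
  set G : ℝ := ∏ i, (κ i:ℝ)^(κ i) with hGdef
  have hG0 : 0 < G := Finset.prod_pos fun i _ => pow_pos (hκ0' i) _
  set E : ℝ := Real.exp k with hEdef
  have hE0 : 0 < E := Real.exp_pos _
  have hprod_de : ∏ i, ((κ i:ℝ)/Real.exp 1)^(κ i) = G / E := by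
    rw [hGdef, hEdef]
    rw [Finset.prod_congr rfl (fun i _ => div_pow (κ i:ℝ) (Real.exp 1) (κ i)),
        Finset.prod_div_distrib, Finset.prod_pow_eq_pow_sum, Real.exp_one_pow, hkdef]
  have hQ : ((∏ i, (κ i).factorial : ℕ):ℝ) ≤ 3^n * (∏ i, Real.sqrt (κ i)) * G / E := by
    push_cast
    calc ∏ i, ((κ i).factorial:ℝ)
        ≤ ∏ i, (3 * Real.sqrt (κ i) * ((κ i:ℝ)/Real.exp 1)^(κ i)) :=
          Finset.prod_le_prod (fun i _ => Nat.cast_nonneg _)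
            (fun i _ => (EG.stirling_bounds (hκ1 i)).2)
      _ = 3^n * (∏ i, Real.sqrt (κ i)) * (G / E) := by
          rw [Finset.prod_mul_distrib, Finset.prod_mul_distrib, Finset.prod_const,
            Finset.card_univ, Fintype.card_fin, hprod_de]
      _ = 3^n * (∏ i, Real.sqrt (κ i)) * G / E := by ring
  have hcast : (k.factorial:ℝ) ≤ ((∏ i, (κ i).factorial : ℕ):ℝ) * W.card := by
    exact_mod_cast hcount
  have hchain : Real.sqrt k * ((k:ℝ)^k / E) ≤ (3^n * (∏ i, Real.sqrt (κ i)) * G / E) * W.card := by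
    calc Real.sqrt k * ((k:ℝ)^k / E) = Real.sqrt k * ((k:ℝ)/Real.exp 1)^k := by
          rw [div_pow, hEdef, Real.exp_one_pow]
      _ ≤ (k.factorial:ℝ) := (EG.stirling_bounds hk1).1
      _ ≤ ((∏ i, (κ i).factorial : ℕ):ℝ) * W.card := hcast
      _ ≤ (3^n * (∏ i, Real.sqrt (κ i)) * G / E) * W.card :=
          mul_le_mul_of_nonneg_right hQ hWc0
  have hchain2 : Real.sqrt k * (k:ℝ)^k ≤ 3^n * (∏ i, Real.sqrt (κ i)) * G * (W.card:ℝ) := by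
    have h := mul_le_mul_of_nonneg_right hchain hE0.le
    calc Real.sqrt k * (k:ℝ)^k = Real.sqrt k * ((k:ℝ)^k / E) * E := by
          field_simp
      _ ≤ (3^n * (∏ i, Real.sqrt (κ i)) * G / E) * (W.card:ℝ) * E := h
      _ = 3^n * (∏ i, Real.sqrt (κ i)) * G * (W.card:ℝ) := by
          rw [mul_assoc (_ / E), mul_comm (W.card:ℝ) E, ← mul_assoc, div_mul_cancel₀ _ hE0.ne']
  set r : ℝ := Real.exp (-(2*(n:ℝ)) / m) with hrdef
  have hr0 : 0 < r := Real.exp_pos _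
  have hnm : (n:ℝ)/(m:ℝ) ≤ 1/2 := by
    rw [div_le_iff₀ hm0]
    linarith
  have hrm : r * (m:ℝ) ≤ (m:ℝ) - (n:ℝ) := by
    set u : ℝ := (n:ℝ)/(m:ℝ) with hudef
    have hu0 : 0 ≤ u := by positivity
    have h1 : 1 + 2*u ≤ Real.exp (2*u) := by linarith [Real.add_one_le_exp (2*u)]
    have h2 : Real.exp (-(2*u)) ≤ 1/(1+2*u) := by
      rw [Real.exp_neg, inv_eq_one_div]
      exact one_div_le_one_div_of_le (by linarith) h1
    have h3 : 1/(1+2*u) ≤ 1 - u := by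
      rw [div_le_iff₀ (by linarith)]
      have hq : 0 ≤ u * (1 - 2*u) := mul_nonneg hu0 (by linarith only [hnm])
      have hr' : (1-u)*(1+2*u) = 1 + u*(1-2*u) := by ring
      rw [hr']
      linarith only [hq]
    have h4 : -(2*(n:ℝ))/m = -(2*u) := by
      rw [hudef]; field_simp
    have h5 : r ≤ 1 - u := by
      rw [hrdef, h4]; exact h2.trans h3
    calc r * m ≤ (1-u)*m := mul_le_mul_of_nonneg_right h5 hm0.le
      _ = (m:ℝ) - (n:ℝ) := by
          rw [hudef, sub_mul, one_mul, div_mul_cancel₀ _ hm0.ne']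
  have hfac : ∀ i, a i * r * (κ i:ℝ) ≤ (k:ℝ) := by
    intro i
    have h1 : a i * (κ i:ℝ) ≤ (m:ℝ) := by
      have h := (le_div_iff₀ (ha0 i)).1 (hκ_le i)
      linarith
    calc a i * r * (κ i:ℝ) = r * (a i * (κ i:ℝ)) := by ring
      _ ≤ r * m := mul_le_mul_of_nonneg_left h1 hr0.le
      _ ≤ (m:ℝ) - (n:ℝ) := hrm
      _ ≤ (k:ℝ) := by linarith [hk_ge]
  have hrk : Real.exp (-(2*(n:ℝ))) ≤ r^k := by
    rw [hrdef, ← Real.exp_nat_mul]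
    apply Real.exp_le_exp.2
    have h1 : (k:ℝ) * (-(2*(n:ℝ)) / m) = -(2*(n:ℝ)) * ((k:ℝ)/m) := by ring
    rw [h1]
    have hkm : (k:ℝ)/m ≤ 1 := by rw [div_le_one hm0]; exact hk_le
    have := mul_le_mul_of_nonpos_left hkm (by linarith : -(2*(n:ℝ)) ≤ 0)
    linarith
  have hkey : P * Real.exp (-(2*(n:ℝ))) * G ≤ (k:ℝ)^k := by
    have h1 : ∏ i, (a i * r * (κ i:ℝ))^(κ i) ≤ ∏ i, (k:ℝ)^(κ i) :=
      Finset.prod_le_prod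
        (fun i _ => pow_nonneg (mul_nonneg (mul_nonneg (ha0 i).le hr0.le) (hκ0' i).le) _)
        (fun i _ => pow_le_pow_left₀ (mul_nonneg (mul_nonneg (ha0 i).le hr0.le) (hκ0' i).le)
          (hfac i) _)
    have h2 : ∏ i, (k:ℝ)^(κ i) = (k:ℝ)^k := by
      rw [Finset.prod_pow_eq_pow_sum, hkdef]
    have h3 : ∏ i, (a i * r * (κ i:ℝ))^(κ i) = P * r^k * G := by
      rw [hPdef, hGdef]
      rw [Finset.prod_congr rfl (fun i _ => mul_pow (a i * r) (κ i:ℝ) (κ i)),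
        Finset.prod_mul_distrib,
        Finset.prod_congr rfl (fun i _ => mul_pow (a i) r (κ i)),
        Finset.prod_mul_distrib, Finset.prod_pow_eq_pow_sum, ← hkdef]
    have h4 : P * Real.exp (-(2*(n:ℝ))) * G ≤ P * r^k * G :=
      mul_le_mul_of_nonneg_right (mul_le_mul_of_nonneg_left hrk hP0.le) hG0.le
    calc P * Real.exp (-(2*(n:ℝ))) * G ≤ P * r^k * G := h4
      _ = ∏ i, (a i * r * (κ i:ℝ))^(κ i) := h3.symm
      _ ≤ ∏ i, (k:ℝ)^(κ i) := h1
      _ = (k:ℝ)^k := h2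
  have hsqrtκ : ∏ i, Real.sqrt (κ i) ≤ Real.sqrt m ^ n := by
    calc ∏ i, Real.sqrt (κ i) ≤ ∏ _i : Fin n, Real.sqrt m :=
        Finset.prod_le_prod (fun i _ => Real.sqrt_nonneg _)
          (fun i _ => Real.sqrt_le_sqrt (hκm i))
      _ = Real.sqrt m ^ n := by
          rw [Finset.prod_const, Finset.card_univ, Fintype.card_fin]
  have hsqrtk : Real.sqrt m / Real.sqrt 2 ≤ Real.sqrt k := by
    rw [← Real.sqrt_div hm0.le]
    apply Real.sqrt_le_sqrt
    linarith only [hk_ge, (div_le_iff₀ hm0).1 hnm]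
  have hstep : (Real.sqrt m / Real.sqrt 2 * (P * Real.exp (-(2*(n:ℝ))))) * G
      ≤ (3^n * Real.sqrt m ^ n * (W.card:ℝ)) * G := by
    calc (Real.sqrt m / Real.sqrt 2 * (P * Real.exp (-(2*(n:ℝ))))) * G
        = (Real.sqrt m / Real.sqrt 2) * (P * Real.exp (-(2*(n:ℝ))) * G) := by ring
      _ ≤ Real.sqrt k * (k:ℝ)^k := by
          exact mul_le_mul hsqrtk hkey
            (mul_nonneg (mul_nonneg hP0.le (Real.exp_pos _).le) hG0.le) (Real.sqrt_nonneg _)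
      _ ≤ 3^n * (∏ i, Real.sqrt (κ i)) * G * (W.card:ℝ) := hchain2
      _ = (3^n * (W.card:ℝ) * G) * (∏ i, Real.sqrt (κ i)) := by ring
      _ ≤ (3^n * (W.card:ℝ) * G) * (Real.sqrt m ^ n) :=
          mul_le_mul_of_nonneg_left hsqrtκ
            (mul_nonneg (mul_nonneg (pow_nonneg (by norm_num) n) hWc0) hG0.le)
      _ = (3^n * Real.sqrt m ^ n * (W.card:ℝ)) * G := by ring
  have hstep' : Real.sqrt m / Real.sqrt 2 * (P * Real.exp (-(2*(n:ℝ))))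
      ≤ 3^n * Real.sqrt m ^ n * (W.card:ℝ) := le_of_mul_le_mul_right hstep hG0
  have hm1' : (1:ℝ) ≤ Real.sqrt m := by
    rw [show (1:ℝ) = Real.sqrt 1 by simp]
    exact Real.sqrt_le_sqrt (by linarith)
  have hsm0 : (0:ℝ) < Real.sqrt m := lt_of_lt_of_le one_pos hm1'
  obtain ⟨n', hn'⟩ : ∃ n', n = n' + 1 := ⟨n - 1, (Nat.succ_pred_eq_of_pos hn).symm⟩
  have hpow : Real.sqrt m ^ n = Real.sqrt m * Real.sqrt m ^ n' := by
    rw [hn', pow_succ']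
  have hstep2 : c₅ * P ≤ Real.sqrt m ^ n' * (W.card:ℝ) := by
    rw [hpow] at hstep'
    have h2 : Real.sqrt m * (P * Real.exp (-(2*(n:ℝ))) / Real.sqrt 2)
        ≤ Real.sqrt m * (3^n * Real.sqrt m ^ n' * (W.card:ℝ)) := by
      calc Real.sqrt m * (P * Real.exp (-(2*(n:ℝ))) / Real.sqrt 2)
          = Real.sqrt m / Real.sqrt 2 * (P * Real.exp (-(2*(n:ℝ)))) := by ring
        _ ≤ 3^n * (Real.sqrt m * Real.sqrt m ^ n') * (W.card:ℝ) := hstep'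
        _ = Real.sqrt m * (3^n * Real.sqrt m ^ n' * (W.card:ℝ)) := by ring
    have h3 := le_of_mul_le_mul_left h2 hsm0
    have hs2 : (0:ℝ) < Real.sqrt 2 := by positivity
    have h4 : P * Real.exp (-(2*(n:ℝ)))
        ≤ 3^n * Real.sqrt 2 * (Real.sqrt m ^ n' * (W.card:ℝ)) := by
      have h5 := mul_le_mul_of_nonneg_right h3 hs2.le
      calc P * Real.exp (-(2*(n:ℝ)))
          = P * Real.exp (-(2*(n:ℝ))) / Real.sqrt 2 * Real.sqrt 2 := by field_simp
        _ ≤ 3^n * Real.sqrt m ^ n' * (W.card:ℝ) * Real.sqrt 2 := h5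
        _ = 3^n * Real.sqrt 2 * (Real.sqrt m ^ n' * (W.card:ℝ)) := by ring
    rw [hc₅def, div_mul_eq_mul_div, div_le_iff₀ (by positivity)]
    calc Real.exp (-(2*(n:ℝ))) * P = P * Real.exp (-(2*(n:ℝ))) := by ring
      _ ≤ 3^n * Real.sqrt 2 * (Real.sqrt m ^ n' * (W.card:ℝ)) := h4
      _ = Real.sqrt m ^ n' * (W.card:ℝ) * (3^n * Real.sqrt 2) := by ring
  have hrm2 : Real.sqrt m ^ n' = (m:ℝ) ^ ep := by
    have hcast' : ((n':ℕ):ℝ) = (n:ℝ) - 1 := by rw [hn']; push_cast; ring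
    rw [Real.sqrt_eq_rpow, ← Real.rpow_natCast ((m:ℝ) ^ ((1:ℝ)/2)) n',
      ← Real.rpow_mul hm0.le, hepdef]
    rw [hcast']
    congr 1
    ring
  have hmlog : (m:ℝ) ≤ C₄ * Real.log x := by
    have h1 : t = Real.log x - Real.log K := by
      rw [htdef, Real.log_div hx0.ne' hK0.ne']
    have h2 : (m:ℝ) ≤ (Real.log x - Real.log K)/H := h1 ▸ hm_le
    have h3 : Real.log x - Real.log K ≤ (1 + |Real.log K|) * Real.log x := by
      have h5 := neg_abs_le (Real.log K)
      have h6 : |Real.log K| ≤ |Real.log K| * Real.log x :=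
        le_mul_of_one_le_right (abs_nonneg _) hlogx
      have h7 : (1 + |Real.log K|) * Real.log x
          = Real.log x + |Real.log K| * Real.log x := by ring
      rw [h7]
      linarith only [h5, h6, hlogx]
    calc (m:ℝ) ≤ (Real.log x - Real.log K)/H := h2
      _ ≤ ((1 + |Real.log K|) * Real.log x)/H := by gcongr
      _ = C₄ * Real.log x := by rw [hC₄def]; ring
  have hrp : (m:ℝ)^ep ≤ C₄^ep * (Real.log x)^ep := by
    rw [← Real.mul_rpow hC₄.le (by linarith : (0:ℝ) ≤ Real.log x)]
    exact Real.rpow_le_rpow hm0.le hmlog hep0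
  have hlx0 : (0:ℝ) < Real.log x ^ ep := Real.rpow_pos_of_pos (by linarith) ep
  rw [div_le_iff₀ hlx0, hcardT, div_mul_eq_mul_div, div_le_iff₀ hCp]
  calc c₅ * c₁ * x = c₅ * (c₁ * x) := by ring
    _ ≤ c₅ * P := mul_le_mul_of_nonneg_left hPc₁ hc₅.le
    _ ≤ Real.sqrt m ^ n' * (W.card:ℝ) := hstep2
    _ = (m:ℝ)^ep * (W.card:ℝ) := by rw [hrm2]
    _ ≤ (C₄^ep * Real.log x ^ ep) * (W.card:ℝ) := mul_le_mul_of_nonneg_right hrp hWc0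
    _ = (W.card:ℝ) * Real.log x ^ ep * C₄^ep := by ring
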